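/- The function ρ(m, s) = (m - M)·Φ((m - M)/s) + s·φ((m - M)/s) is strictly positive for all m ∈ ℝ and s > 0, where Φ and φ are the standard normal CDF and PDF. -/

import Mathlib

noncomputable def stdPdf (u : ℝ) : ℝ := Real.exp (-u ^ 2 / 2) / Real.sqrt (2 * Real.pi)

noncomputable def stdCdf (t : ℝ) : ℝ := ∫ u in Set.Iic t, stdPdf u

open MeasureTheory Real Set Filter

lemma stdPdf_pos (u : ℝ) : 0 < stdPdf u :=
  div_pos (Real.exp_pos _) (Real.sqrt_pos.mpr (by positivity))

lemma stdPdf_eq (u : ℝ) : stdPdf u = Real.exp (-(1/2) * u ^ 2) * (Real.sqrt (2 * Real.pi))⁻¹ := by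
  rw [stdPdf, div_eq_mul_inv]; ring_nf

lemma integrable_stdPdf : Integrable stdPdf := by
  have h := (integrable_exp_neg_mul_sq (b := 1/2) (by norm_num)).mul_const
    ((Real.sqrt (2 * Real.pi))⁻¹)
  exact h.congr (by filter_upwards with u; rw [stdPdf_eq])

lemma integrable_mul_stdPdf : Integrable (fun u => u * stdPdf u) := by
  have h := (integrable_rpow_mul_exp_neg_mul_sq (b := 1/2) (by norm_num) (s := 1)
    (by norm_num)).mul_const ((Real.sqrt (2 * Real.pi))⁻¹)
  refine h.congr ?_
  filter_upwards with u
  rw [stdPdf_eq, Real.rpow_one]; ring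

lemma hasDerivAt_neg_stdPdf (u : ℝ) :
    HasDerivAt (fun u => -stdPdf u) (u * stdPdf u) u := by
  have h1 : HasDerivAt (fun u : ℝ => -u ^ 2 / 2) (-u) u := by
    have := ((hasDerivAt_pow 2 u).neg).div_const 2
    simpa using this.congr_deriv (by ring)
  have h2 := (h1.exp).div_const (Real.sqrt (2 * Real.pi))
  have h3 := h2.neg
  refine h3.congr_deriv ?_
  rw [stdPdf]; field_simp

lemma tendsto_stdPdf_atBot : Tendsto stdPdf atBot (nhds 0) := by
  have h2 : Tendsto (fun u : ℝ => Real.exp (-u ^ 2 / 2)) atBot (nhds 0) := by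
    apply squeeze_zero' (g := fun u => Real.exp u)
      (by filter_upwards with u using (Real.exp_pos _).le) ?_ Real.tendsto_exp_atBot
    filter_upwards [Filter.eventually_le_atBot (-2 : ℝ)] with u hu
    exact Real.exp_le_exp.mpr (by nlinarith)
  have h3 := h2.div_const (Real.sqrt (2 * Real.pi))
  simp only [zero_div] at h3
  exact h3.congr fun u => rfl

lemma integral_Iic_mul_stdPdf (z : ℝ) :
    ∫ u in Set.Iic z, u * stdPdf u = -stdPdf z := by
  have h := integral_Iic_of_hasDerivAt_of_tendsto' (f := fun u => -stdPdf u)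
    (f' := fun u => u * stdPdf u) (a := z) (m := 0)
    (fun x _ => hasDerivAt_neg_stdPdf x) integrable_mul_stdPdf.integrableOn
    (by simpa using tendsto_stdPdf_atBot.neg)
  simpa using h

lemma stdCdf_pos (t : ℝ) : 0 < stdCdf t := by
  rw [stdCdf, setIntegral_pos_iff_support_of_nonneg_ae
    (by filter_upwards with u using (stdPdf_pos u).le) integrable_stdPdf.integrableOn]
  have hsupp : Function.support stdPdf = Set.univ := by
    ext u; simp [Function.mem_support, (stdPdf_pos u).ne']
  rw [hsupp, Set.univ_inter, Real.volume_Iic]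
  simp

lemma mills {z : ℝ} (hz : z < 0) : stdCdf z < stdPdf z / (-z) := by
  have hkey : 0 < ∫ u in Set.Iic z, ((u / z) * stdPdf u - stdPdf u) := by
    rw [setIntegral_pos_iff_support_of_nonneg_ae]
    · refine lt_of_lt_of_le ?_ (measure_mono (show Set.Iio z ⊆ _ from ?_))
      · simp [Real.volume_Iio]
      · intro u hu
        have hu' : u < z := Set.mem_Iio.mp hu
        refine ⟨?_, le_of_lt hu'⟩
        simp only [Function.mem_support]
        have h1 : (1 : ℝ) < u / z := by
          rw [lt_div_iff_of_neg hz]; linarith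
        have := stdPdf_pos u
        nlinarith
    · filter_upwards [ae_restrict_mem (measurableSet_Iic (a := z))] with u hu
      have h1 : (1 : ℝ) ≤ u / z := by
        rw [le_div_iff_of_neg hz]; linarith [Set.mem_Iic.mp hu]
      have := stdPdf_pos u
      simp only [Pi.zero_apply]
      nlinarith
    · apply Integrable.integrableOn
      have : Integrable (fun u => (1 / z) * (u * stdPdf u)) :=
        integrable_mul_stdPdf.const_mul _
      refine (this.sub integrable_stdPdf).congr ?_
      filter_upwards with u; simp only [Pi.sub_apply]; ring
  have heq : ∫ u in Set.Iic z, ((u / z) * stdPdf u - stdPdf u)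
      = stdPdf z / (-z) - stdCdf z := by
    rw [integral_sub, ← stdCdf]
    · congr 1
      have : ∀ u : ℝ, (u / z) * stdPdf u = (1/z) * (u * stdPdf u) := fun u => by ring
      simp_rw [this]
      rw [integral_const_mul, integral_Iic_mul_stdPdf]
      rw [div_neg]
      ring
    · apply Integrable.integrableOn
      have : Integrable (fun u => (1 / z) * (u * stdPdf u)) :=
        integrable_mul_stdPdf.const_mul _
      refine this.congr ?_
      filter_upwards with u; ring
    · exact integrable_stdPdf.integrableOn
  linarith [heq ▸ hkey]

theorem expected_improvement_pos (M : ℝ) :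
    ∀ (m : ℝ) (s : ℝ), 0 < s →
      0 < (m - M) * stdCdf ((m - M) / s) + s * stdPdf ((m - M) / s) := by
  intro m s hs
  set a := m - M with ha
  set z := a / s with hzd
  rcases le_or_gt 0 a with h | h
  · exact add_pos_of_nonneg_of_pos (mul_nonneg h (stdCdf_pos z).le)
      (mul_pos hs (stdPdf_pos z))
  · have hz : z < 0 := div_neg_of_neg_of_pos h hs
    have hm := mills hz
    have h2 := mul_lt_mul_of_neg_left hm h
    have ha0 : a ≠ 0 := ne_of_lt h
    have h3 : a * (stdPdf z / (-z)) = -(s * stdPdf z) := by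
      rw [hzd]
      field_simp
    rw [h3] at h2
    linarith
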